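/- If the accumulated error satisfies |∑_{i∈S} e_i| < ⌊q/4⌋ (with errors taken as centered representatives mod q), then the LWE decryption of a well-formed ciphertext recovers the encrypted bit: for ciphertext (a,b) with a = ∑_{i∈S} a_i and b = ∑_{i∈S}(⟨a_i,s⟩ + e_i) + r⌊q/2⌋ (mod q), one has Q(b − ⟨a,s⟩) = r. -/
import Mathlib


/-- The lattice-PUF quantizer: maps `x ∈ ℤ_q` to `0` if its representative in `[0,q)`
lies in `[0, q/4] ∪ (3q/4, q-1]`, and to `1` if it lies in `(q/4, 3q/4]`. -/
def Q (q : ℕ) (x : ZMod q) : ℕ :=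
  if q / 4 < x.val ∧ x.val ≤ 3 * q / 4 then 1 else 0

private lemma emod_of_bounds (m q : ℤ) (h1 : -q < m) (h2 : m < q) :
    m % q = m ∨ m % q = m + q := by
  rcases le_or_gt 0 m with h | h
  · left; exact Int.emod_eq_of_lt h h2
  · right
    have hq : (m + q) % q = m % q := by
      simpa using Int.add_mul_emod_self_left (a := m) (b := q) (c := 1)
    rw [← hq]
    exact Int.emod_eq_of_lt (by linarith) (by linarith)

/-- If the accumulated error satisfies `|∑_{i∈S} e_i| < ⌊q/4⌋`, then LWE
decryption of a well-formed ciphertext recovers the encrypted bit. -/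
theorem lwe_decryption_correct
    (q n : ℕ) (hq : ∃ k : ℕ, q = 2 ^ k)
    {ι : Type} (S : Finset ι)
    (s : Fin n → ZMod q) (a : ι → Fin n → ZMod q) (e : ι → ℤ)
    (r : ℕ) (hr : r ≤ 1)
    (herr : |∑ i ∈ S, e i| < (q / 4 : ℕ))
    (aSum : Fin n → ZMod q) (b : ZMod q)
    (ha : aSum = ∑ i ∈ S, a i)
    (hb : b = (∑ i ∈ S, ((∑ j, a i j * s j) + (e i : ZMod q))) + (r : ZMod q) * ((q / 2 : ℕ) : ZMod q)) :
    Q q (b - ∑ j, aSum j * s j) = r := by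
  set E : ℤ := ∑ i ∈ S, e i with hE
  rw [abs_lt] at herr
  have hq4 : 0 < q / 4 := by omega
  have h4q : 4 ∣ q := by
    obtain ⟨k, rfl⟩ := hq
    have hk : 2 ≤ k := by
      by_contra h
      push_neg at h
      interval_cases k <;> omega
    exact ⟨2 ^ (k - 2), by rw [show (4:ℕ) = 2 ^ 2 from rfl, ← pow_add]; congr 1; omega⟩
  obtain ⟨c, hc⟩ := h4q
  haveI : NeZero q := ⟨by omega⟩
  have key : b - ∑ j, aSum j * s j = ((E + r * (q / 2 : ℕ) : ℤ) : ZMod q) := by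
    subst ha hb
    simp only [Finset.sum_apply]
    have hsw : ∑ j, (∑ i ∈ S, a i j) * s j = ∑ i ∈ S, ∑ j, a i j * s j := by
      simp_rw [Finset.sum_mul]
      rw [Finset.sum_comm]
    rw [Finset.sum_add_distrib, hsw, hE]
    have hcast : (((∑ i ∈ S, e i) + r * (q / 2 : ℕ) : ℤ) : ZMod q) =
        (((∑ i ∈ S, e i : ℤ)) : ZMod q) + (r : ZMod q) * ((q / 2 : ℕ) : ZMod q) := by
      push_cast
      norm_cast
      rw [Int.cast_add, Int.cast_natCast]
    rw [hcast]
    push_cast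
    ring
  rw [key]
  set m : ℤ := E + r * (q / 2 : ℕ) with hm
  have hval : (((m : ZMod q)).val : ℤ) = m % q := ZMod.val_intCast m
  have hvlt : ((m : ZMod q)).val < q := ZMod.val_lt _
  interval_cases r <;>
  · simp only [Nat.cast_zero, Nat.cast_one, zero_mul, one_mul, add_zero] at hm
    have hd := emod_of_bounds m q (by omega) (by omega)
    rw [← hval] at hd
    simp only [Q]
    split <;> omega
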